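/- Let W be an n×n nilpotent matrix over a field F of characteristic 0, B = I + W, and let X be the 3×3 block matrix with W on the diagonal, B on the first superdiagonal, and 0 elsewhere. Then for 2 ≤ k, rank(X^k) = rank(W^(k-2)) + rank(W^k) + rank(W^(k+2)). -/

import Mathlib

open Matrix Polynomial LinearMap

section Aux

variable {F : Type*} [Field F]

/-- equivalence between a product submodule and the product of submodules -/
def prodSubEquiv {V V' : Type*} [AddCommGroup V] [AddCommGroup V'] [Module F V] [Module F V']
    (p : Submodule F V) (q : Submodule F V') : (p.prod q) ≃ₗ[F] p × q where
  toFun x := (⟨x.1.1, x.2.1⟩, ⟨x.1.2, x.2.2⟩)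
  invFun x := ⟨(x.1.1, x.2.1), ⟨x.1.2, x.2.2⟩⟩
  left_inv _ := rfl
  right_inv _ := rfl
  map_add' _ _ := rfl
  map_smul' _ _ := rfl

theorem range_prodMap' {V₁ V₂ W₁ W₂ : Type*} [AddCommGroup V₁] [AddCommGroup V₂]
    [AddCommGroup W₁] [AddCommGroup W₂] [Module F V₁] [Module F V₂] [Module F W₁] [Module F W₂]
    (f : V₁ →ₗ[F] W₁) (g : V₂ →ₗ[F] W₂) :
    range (f.prodMap g) = (range f).prod (range g) := by
  ext ⟨a, b⟩
  simp only [LinearMap.mem_range, Submodule.mem_prod, LinearMap.prodMap_apply, Prod.mk.injEq,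
    Prod.exists]
  constructor
  · rintro ⟨x, y, hx, hy⟩; exact ⟨⟨x, hx⟩, ⟨y, hy⟩⟩
  · rintro ⟨⟨x, hx⟩, ⟨y, hy⟩⟩; exact ⟨x, y, hx, hy⟩

theorem rank_fromBlocks_diag {m o : Type*} [Fintype m] [Fintype o] [DecidableEq m] [DecidableEq o]
    (A : Matrix m m F) (D : Matrix o o F) :
    (Matrix.fromBlocks A 0 0 D).rank = A.rank + D.rank := by
  classical
  set el := (LinearEquiv.sumArrowLequivProdArrow m o F F)
  have hf : (Matrix.fromBlocks A 0 0 D).mulVecLin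
      = el.symm.toLinearMap ∘ₗ ((A.mulVecLin.prodMap D.mulVecLin) ∘ₗ el.toLinearMap) := by
    refine LinearMap.ext fun x => ?_
    simp only [mulVecLin_apply, LinearMap.comp_apply, LinearEquiv.coe_coe,
      LinearMap.prodMap_apply]
    funext i
    cases i with
    | inl i =>
      simp [el, Matrix.mulVec, Matrix.fromBlocks, dotProduct, Fintype.sum_sum_type,
        LinearEquiv.sumArrowLequivProdArrow, mulVecLin_apply]
    | inr i =>
      simp [el, Matrix.mulVec, Matrix.fromBlocks, dotProduct, Fintype.sum_sum_type,
        LinearEquiv.sumArrowLequivProdArrow, mulVecLin_apply]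
  have hr : range (Matrix.fromBlocks A 0 0 D).mulVecLin
      = Submodule.map el.symm.toLinearMap (range (A.mulVecLin.prodMap D.mulVecLin)) := by
    rw [hf, LinearMap.range_comp, LinearMap.range_comp_of_range_eq_top]
    exact LinearMap.range_eq_top.2 el.surjective
  rw [Matrix.rank, Matrix.rank, Matrix.rank, hr, LinearEquiv.finrank_map_eq, range_prodMap']
  rw [(prodSubEquiv (range A.mulVecLin) (range D.mulVecLin)).finrank_eq]
  exact Module.finrank_prod

theorem rank_smul_ne_zero {m : Type*} [Fintype m] [DecidableEq m]
    (c : F) (hc : c ≠ 0) (M : Matrix m m F) : (c • M).rank = M.rank := by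
  rw [Matrix.smul_eq_diagonal_mul]
  exact Matrix.rank_mul_eq_right_of_isUnit_det _ _ (by
    simp [Matrix.det_diagonal, isUnit_iff_ne_zero, hc])

theorem isUnit_diagonal_of_isUnit {R : Type*} [Ring R] {m : Type*} [Fintype m] [DecidableEq m]
    (v : m → R) (h : ∀ i, IsUnit (v i)) : IsUnit (Matrix.diagonal v) := by
  have h1 : (fun i => v i * ↑(h i).unit⁻¹) = fun _ => (1 : R) :=
    funext fun i => (h i).mul_val_inv
  have h2 : (fun i => ↑(h i).unit⁻¹ * v i) = fun _ => (1 : R) :=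
    funext fun i => (h i).val_inv_mul
  refine ⟨⟨Matrix.diagonal v, Matrix.diagonal (fun i => ↑(h i).unit⁻¹), ?_, ?_⟩, rfl⟩
  · rw [Matrix.diagonal_mul_diagonal, h1, Matrix.diagonal_one]
  · rw [Matrix.diagonal_mul_diagonal, h2, Matrix.diagonal_one]

theorem MF0_pow (m : ℕ) :
    (!![X, 1, 0; 0, X, 1; 0, 0, X] : Matrix (Fin 3) (Fin 3) F[X]) ^ (m + 2) =
      !![X^(m+2), ((m+2 : ℕ) : F[X]) * X^(m+1), (((m+2).choose 2 : ℕ) : F[X]) * X^m;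
         0, X^(m+2), ((m+2 : ℕ) : F[X]) * X^(m+1);
         0, 0, X^(m+2)] := by
  induction m with
  | zero =>
    rw [pow_two, Matrix.mul_fin_three]
    norm_num [← two_mul, ← pow_two]
  | succ m ih =>
    have h2 : m + 1 + 2 = (m + 2) + 1 := by ring
    rw [h2, pow_succ, ih, Matrix.mul_fin_three]
    have hch : ((m+3).choose 2) = (m+2).choose 2 + (m+2) := by
      rw [Nat.choose_succ_succ, Nat.choose_one_right]; ring
    congr 1 <;> push_cast [hch] <;> ring

theorem core_identity {R : Type*} [CommRing R] (m : ℕ) (aa bb x : R) :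
    (!![1, 0, 0; -(aa*x), bb, 0; -(x^2), aa*x, bb - aa^2] *
      !![x^(m+2), aa*x^(m+1), bb*x^m; 0, x^(m+2), aa*x^(m+1); 0, 0, x^(m+2)]) *
      !![bb - aa^2, 0, 0; aa*x, bb, 0; -(x^2), -(aa*x), 1]
      = !![0, 0, bb*x^m; 0, bb*(bb - aa^2)*x^(m+2), 0; -((bb - aa^2)*x^(m+4)), 0, 0] := by
  rw [Matrix.mul_fin_three, Matrix.mul_fin_three]
  congr 1 <;> ring

end Aux

/-- Case `t = 3`: with `W` nilpotent, `B = I + W`, and `X` the `3 × 3` block bidiagonal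
matrix with diagonal blocks `W` and superdiagonal blocks `B`, one has
`rank(X^k) = rank(W^(k-2)) + rank(W^k) + rank(W^(k+2))` for `k ≥ 2`. -/
theorem rank_pow_block_t3 {F : Type*} [Field F] [CharZero F] {n : ℕ}
    (W : Matrix (Fin n) (Fin n) F) (hW : IsNilpotent W)
    (X : Matrix (Fin 3 × Fin n) (Fin 3 × Fin n) F)
    (hX : ∀ p q : Fin 3 × Fin n,
      X p q = if p.1 = q.1 then W p.2 q.2
        else if (p.1 : ℕ) + 1 = (q.1 : ℕ) then (1 + W) p.2 q.2 else 0) :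
    ∀ k : ℕ, 2 ≤ k →
      (X ^ k).rank = (W ^ (k - 2)).rank + (W ^ k).rank + (W ^ (k + 2)).rank := by
  intro k hk
  obtain ⟨m, rfl⟩ : ∃ m, k = m + 2 := ⟨k - 2, by omega⟩
  have hBu : IsUnit (1 + W) := hW.isUnit_one_add
  set ee := Matrix.compRingEquiv (Fin 3) (Fin n) F with hee
  set A : Matrix (Fin 3) (Fin 3) (Matrix (Fin n) (Fin n) F) := !![W, 1 + W, 0; 0, W, 1 + W; 0, 0, W] with hA
  have hXA : X = ee A := by
    ext ⟨i, p⟩ ⟨j, q⟩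
    rw [hX]
    fin_cases i <;> fin_cases j <;>
      simp [ee, hA, Matrix.compRingEquiv_apply, Matrix.comp_apply,
        Matrix.vecHead, Matrix.vecTail]
  set MZ : Matrix (Fin 3) (Fin 3) (Matrix (Fin n) (Fin n) F) := !![W, 1, 0; 0, W, 1; 0, 0, W] with hMZ
  set dd : Matrix (Fin 3) (Fin 3) (Matrix (Fin n) (Fin n) F) := Matrix.diagonal ![1, 1 + W, (1 + W) * (1 + W)] with hdd
  have hddu : IsUnit dd := by
    apply isUnit_diagonal_of_isUnit
    intro i
    fin_cases i <;> simp [hBu, hBu.mul hBu]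
  have hswap : dd * A = MZ * dd := by
    ext i j
    rw [hdd, Matrix.diagonal_mul, Matrix.mul_diagonal]
    fin_cases i <;> fin_cases j <;>
      simp [hA, hMZ, Matrix.vecHead, Matrix.vecTail] <;> noncomm_ring
  have hswapk : ∀ t, dd * A ^ t = MZ ^ t * dd := by
    intro t
    induction t with
    | zero => simp
    | succ t ih =>
      rw [pow_succ, ← mul_assoc, ih, mul_assoc, hswap, ← mul_assoc, ← pow_succ]
  -- scalars
  set aF : F := ((m + 2 : ℕ) : F) with haF
  set bF : F := (((m + 2).choose 2 : ℕ) : F) with hbF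
  set cF : F := bF - aF ^ 2 with hcF
  have hbF0 : bF ≠ 0 := by
    rw [hbF]
    exact Nat.cast_ne_zero.mpr (Nat.choose_pos (by omega)).ne'
  have hcF0 : cF ≠ 0 := by
    have hle : ((m + 2).choose 2) < (m + 2) ^ 2 := by
      rw [Nat.choose_two_right]
      have h1 : (m + 2) * (m + 2 - 1) / 2 ≤ (m + 2) * (m + 2 - 1) := Nat.div_le_self _ _
      have h2 : (m + 2) * (m + 2 - 1) < (m + 2) * (m + 2) :=
        Nat.mul_lt_mul_of_le_of_lt (le_refl (m + 2)) (by omega) (by omega)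
      have h3 : (m + 2) ^ 2 = (m + 2) * (m + 2) := by ring
      omega
    rw [hcF, sub_ne_zero, hbF, haF]
    intro h0
    have : (((m + 2).choose 2 : ℕ) : F) = (((m + 2) ^ 2 : ℕ) : F) := by
      push_cast
      rw [h0]
      push_cast
      ring
    exact hle.ne (Nat.cast_injective this)
  -- polynomial matrices
  set Pm : Matrix (Fin 3) (Fin 3) F[X] :=
    !![1, 0, 0; -(C aF * Polynomial.X), C bF, 0; -(Polynomial.X ^ 2), C aF * Polynomial.X, C bF - (C aF) ^ 2] with hPm
  set Qm : Matrix (Fin 3) (Fin 3) F[X] :=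
    !![C bF - (C aF) ^ 2, 0, 0; C aF * Polynomial.X, C bF, 0; -(Polynomial.X ^ 2), -(C aF * Polynomial.X), 1] with hQm
  set Dm : Matrix (Fin 3) (Fin 3) F[X] :=
    !![0, 0, C bF * Polynomial.X ^ m; 0, C (bF * cF) * Polynomial.X ^ (m + 2), 0;
       C (-cF) * Polynomial.X ^ (m + 4), 0, 0] with hDm
  have hpow : (!![Polynomial.X, 1, 0; 0, Polynomial.X, 1; 0, 0, Polynomial.X] : Matrix (Fin 3) (Fin 3) F[X]) ^ (m + 2) =
      !![Polynomial.X ^ (m + 2), C aF * Polynomial.X ^ (m + 1), C bF * Polynomial.X ^ m;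
         0, Polynomial.X ^ (m + 2), C aF * Polynomial.X ^ (m + 1); 0, 0, Polynomial.X ^ (m + 2)] := by
    rw [MF0_pow]
    rw [haF, hbF, map_natCast, map_natCast]
  have hcore : Pm * (!![Polynomial.X, 1, 0; 0, Polynomial.X, 1; 0, 0, Polynomial.X] : Matrix (Fin 3) (Fin 3) F[X]) ^ (m + 2)
      * Qm = Dm := by
    rw [hpow, hPm, hQm, hDm, core_identity m (C aF) (C bF) Polynomial.X]
    refine Matrix.ext fun i j => ?_
    fin_cases i <;> fin_cases j <;>
      simp [hcF, Matrix.vecHead, Matrix.vecTail, _root_.map_mul, _root_.map_sub,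
        _root_.map_neg, _root_.map_pow] <;>
      ring
  have hCu : IsUnit (C bF * (C bF - C aF ^ 2) : F[X]) := by
    have : (C bF * (C bF - C aF ^ 2) : F[X]) = C (bF * cF) := by
      rw [hcF]; push_cast [_root_.map_mul, _root_.map_sub, _root_.map_pow]; ring
    rw [this]
    exact Polynomial.isUnit_C.mpr (isUnit_iff_ne_zero.mpr (mul_ne_zero hbF0 hcF0))
  have hPu : IsUnit Pm := by
    rw [Matrix.isUnit_iff_isUnit_det]
    have : Pm.det = C bF * (C bF - C aF ^ 2) := by
      rw [hPm, Matrix.det_fin_three]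
      simp
      try ring
    rw [this]; exact hCu
  have hQu : IsUnit Qm := by
    rw [Matrix.isUnit_iff_isUnit_det]
    have : Qm.det = C bF * (C bF - C aF ^ 2) := by
      rw [hQm, Matrix.det_fin_three]
      simp
      try ring
    rw [this]; exact hCu
  -- map to matrices over F
  set ψ := (Polynomial.aeval W : F[X] →ₐ[F] Matrix (Fin n) (Fin n) F) with hψ
  set Ψ : Matrix (Fin 3) (Fin 3) F[X] →+* Matrix (Fin 3) (Fin 3) (Matrix (Fin n) (Fin n) F) :=
    RingHom.mapMatrix ψ.toRingHom with hΨ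
  have hMZψ : MZ = Ψ !![Polynomial.X, 1, 0; 0, Polynomial.X, 1; 0, 0, Polynomial.X] := by
    ext i j
    fin_cases i <;> fin_cases j <;>
      simp [hΨ, hψ, RingHom.mapMatrix_apply, hMZ, Matrix.map_apply,
        Matrix.vecHead, Matrix.vecTail]
  have himg : Ψ Pm * MZ ^ (m + 2) * Ψ Qm = Ψ Dm := by
    rw [hMZψ, ← _root_.map_pow, ← _root_.map_mul, ← _root_.map_mul, hcore]
  -- rank bookkeeping
  have hXk : X ^ (m + 2) = ee (A ^ (m + 2)) := by rw [hXA, ← map_pow]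
  have hdet1 : IsUnit (ee dd).det := (Matrix.isUnit_iff_isUnit_det _).mp (hddu.map ee)
  have hdetP : IsUnit (ee (Ψ Pm)).det :=
    (Matrix.isUnit_iff_isUnit_det _).mp ((hPu.map Ψ).map ee)
  have hdetQ : IsUnit (ee (Ψ Qm)).det :=
    (Matrix.isUnit_iff_isUnit_det _).mp ((hQu.map Ψ).map ee)
  -- the final block-diagonal shape
  set G1 : Matrix (Fin n) (Fin n) F := bF • W ^ m with hG1
  set G2 : Matrix (Fin n) (Fin n) F := (bF * cF) • W ^ (m + 2) with hG2
  set G3 : Matrix (Fin n) (Fin n) F := (-cF) • W ^ (m + 4) with hG3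
  let eL : (Fin 3 × Fin n) ≃ (Fin n ⊕ (Fin n ⊕ Fin n)) :=
    { toFun := fun x => ![Sum.inl, fun p => Sum.inr (Sum.inl p), fun p => Sum.inr (Sum.inr p)]
        x.1 x.2
      invFun := Sum.elim (fun p => (0, p)) (Sum.elim (fun p => (1, p)) (fun p => (2, p)))
      left_inv := fun x => by rcases x with ⟨i, p⟩; fin_cases i <;> rfl
      right_inv := fun x => by rcases x with p | p | p <;> rfl }
  let eR : (Fin 3 × Fin n) ≃ (Fin n ⊕ (Fin n ⊕ Fin n)) :=
    { toFun := fun x => ![fun p => Sum.inr (Sum.inr p), fun p => Sum.inr (Sum.inl p), Sum.inl]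
        x.1 x.2
      invFun := Sum.elim (fun p => (2, p)) (Sum.elim (fun p => (1, p)) (fun p => (0, p)))
      left_inv := fun x => by rcases x with ⟨i, p⟩; fin_cases i <;> rfl
      right_inv := fun x => by rcases x with p | p | p <;> rfl }
  have hflat : ee (Ψ Dm) =
      (Matrix.fromBlocks G1 0 0 (Matrix.fromBlocks G2 0 0 G3)).submatrix eL eR := by
    ext ⟨i, p⟩ ⟨j, q⟩
    fin_cases i <;> fin_cases j <;>
      simp [ee, Matrix.compRingEquiv_apply, Matrix.comp_apply, hΨ, hψ, hDm,
        RingHom.mapMatrix_apply, Matrix.map_apply, Matrix.vecHead, Matrix.vecTail,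
        eL, eR, Matrix.fromBlocks, hG1, hG2, hG3, hcF, Algebra.smul_def, _root_.map_sub, _root_.map_mul,
        _root_.map_pow, mul_assoc]
  -- put everything together
  have e1 : m + 2 - 2 = m := by omega
  have e2 : m + 2 + 2 = m + 4 := by omega
  rw [e1, e2]
  calc (X ^ (m + 2)).rank
      = (ee dd * X ^ (m + 2)).rank :=
        (Matrix.rank_mul_eq_right_of_isUnit_det (ee dd) _ hdet1).symm
    _ = (ee (MZ ^ (m + 2)) * ee dd).rank := by
        rw [hXk, ← _root_.map_mul, hswapk (m + 2), _root_.map_mul]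
    _ = (ee (MZ ^ (m + 2))).rank := Matrix.rank_mul_eq_left_of_isUnit_det _ _ hdet1
    _ = (ee (Ψ Pm) * ee (MZ ^ (m + 2)) * ee (Ψ Qm)).rank := by
        rw [Matrix.rank_mul_eq_left_of_isUnit_det _ _ hdetQ,
          Matrix.rank_mul_eq_right_of_isUnit_det _ _ hdetP]
    _ = (ee (Ψ Dm)).rank := by rw [← _root_.map_mul, ← _root_.map_mul, himg]
    _ = (Matrix.fromBlocks G1 0 0 (Matrix.fromBlocks G2 0 0 G3)).rank := by
        rw [hflat, Matrix.rank_submatrix]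
    _ = G1.rank + (G2.rank + G3.rank) := by
        rw [rank_fromBlocks_diag, rank_fromBlocks_diag]
    _ = (W ^ m).rank + (W ^ (m + 2)).rank + (W ^ (m + 4)).rank := by
        rw [hG1, hG2, hG3, rank_smul_ne_zero _ hbF0, rank_smul_ne_zero _
          (mul_ne_zero hbF0 hcF0), rank_smul_ne_zero _ (neg_ne_zero.mpr hcF0)]
        ring
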